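/- Let G be a graph with a stable set twin class X whose vertices have no neighbors outside X (X is isolated in the quotient graph), with |X| ≥ k⁵ and |V(G) \ X| ≤ k³. Let G' be obtained from G by deleting all but k⁴ vertices of X. Then G is k-equistable if and only if G' is k-equistable. -/

import Mathlib

open Finset

variable {V : Type*}

/-- Two vertices are twins if they have the same neighbors other than each other. -/
def Twins (G : SimpleGraph V) (u v : V) : Prop :=
  G.neighborSet u \ {v} = G.neighborSet v \ {u}

/-- A twin class is an equivalence class of the twin relation. -/
def TwinClass (G : SimpleGraph V) (C : Set V) : Prop :=
  ∃ u, C = {v | Twins G u v}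

/-- A stable (independent) set of vertices. -/
def IsStable (G : SimpleGraph V) (S : Set V) : Prop :=
  ∀ ⦃x⦄, x ∈ S → ∀ ⦃y⦄, y ∈ S → ¬ G.Adj x y

/-- A maximal stable set. -/
def IsMaxStable [Fintype V] [DecidableEq V] (G : SimpleGraph V) (S : Finset V) : Prop :=
  IsStable G ↑S ∧ ∀ T : Finset V, IsStable G ↑T → S ⊆ T → S = T

/-- `(w, t)` is an equistable structure of `G`: a set is a maximal stable set
iff its total weight is `t`. -/
def EquistableStruct [Fintype V] [DecidableEq V] (G : SimpleGraph V) (w : V → ℕ) (t : ℕ) : Prop :=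
  ∀ S : Finset V, IsMaxStable G S ↔ ∑ x ∈ S, w x = t

/-- `G` is `k`-equistable: it has an equistable structure with weights in `{1,…,k}`. -/
def KEquistable [Fintype V] [DecidableEq V] (G : SimpleGraph V) (k : ℕ) : Prop :=
  ∃ t : ℕ, 0 < t ∧ ∃ w : V → ℕ, (∀ x, 1 ≤ w x ∧ w x ≤ k) ∧ EquistableStruct G w t

/-- `G` is target-`t` equistable: it has an equistable structure with positive
integer weights and target `t`. -/
def TargetEquistable [Fintype V] [DecidableEq V] (G : SimpleGraph V) (t : ℕ) : Prop :=
  ∃ w : V → ℕ, (∀ x, 1 ≤ w x) ∧ EquistableStruct G w t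


-- block lemma
lemma exists_block {α : Type*} [DecidableEq α] (a : α → ℕ) (v : ℕ) (hv : 1 ≤ v)
    (O : Finset α) (hO : v ≤ O.card) :
    ∃ T ⊆ O, T.Nonempty ∧ T.card ≤ v ∧ v ∣ ∑ x ∈ T, a x := by
  classical
  set l : List α := O.toList with hl
  have hlen : l.length = O.card := O.length_toList
  set l' : List α := l.take v with hl'
  have hlen' : l'.length = v := by
    simp [hl', List.length_take, hlen]
    omega
  set p : ℕ → ℕ := fun i => ((l'.take i).map a).sum with hp
  -- pigeonhole on residues
  obtain ⟨i, hi, j, hj, hij, hpij⟩ :=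
    Finset.exists_ne_map_eq_of_card_lt_of_maps_to (s := Finset.range (v + 1))
      (t := Finset.range v) (by simp) (f := fun i => p i % v)
      (fun i _ => Finset.mem_range.mpr (Nat.mod_lt _ hv))
  -- wlog i < j
  wlog hlt : i < j generalizing i j
  · exact this j hj i hi hij.symm hpij.symm (by omega)
  have hi' : i ≤ l'.length := by simp at hi; omega
  have hj' : j ≤ l'.length := by simp at hj; omega
  set slice : List α := (l'.drop i).take (j - i) with hslice
  have hsplit : l'.take j = l'.take i ++ slice := by
    rw [hslice, ← List.take_add]
    congr 1
    omega
  have hsum : p j = p i + ((slice.map a).sum) := by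
    rw [hp]
    simp only [hsplit, List.map_append, List.sum_append]
  have hdvd : v ∣ (slice.map a).sum := by
    have h1 : p i ≡ p j [MOD v] := hpij
    have h2 := (Nat.modEq_iff_dvd' (by omega : p i ≤ p j)).mp h1
    have : p j - p i = (slice.map a).sum := by omega
    rwa [this] at h2
  have hsubl : slice.Sublist l := by
    have s1 : slice.Sublist (l'.drop i) := List.take_sublist _ _
    have s2 : (l'.drop i).Sublist l' := List.drop_sublist _ _
    have s3 : l'.Sublist l := List.take_sublist _ _
    exact (s1.trans s2).trans s3
  have hnd : slice.Nodup := hsubl.nodup (O.nodup_toList)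
  have hslen : slice.length = j - i := by
    rw [hslice]
    simp [List.length_take, List.length_drop, hlen']
    omega
  refine ⟨slice.toFinset, ?_, ?_, ?_, ?_⟩
  · intro x hx
    rw [List.mem_toFinset] at hx
    have := hsubl.mem hx  -- membership? maybe hsubl.subset
    rwa [← Finset.mem_toList]
  · have : slice ≠ [] := by
      intro h
      rw [h] at hslen
      simp at hslen
      omega
    rcases List.exists_mem_of_ne_nil slice this with ⟨x, hx⟩
    exact ⟨x, List.mem_toFinset.mpr hx⟩
  · rw [List.toFinset_card_of_nodup hnd, hslen]; omega
  · rw [List.sum_toFinset _ hnd]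
    exact hdvd

lemma claimC {α : Type*} [DecidableEq α] (a : α → ℕ) (k v m : ℕ) (hv1 : 1 ≤ v) (hvk : v ≤ k)
    (hm : k^3 ≤ m * v) :
    ∀ n (O : Finset α), O.card ≤ n → (∀ x ∈ O, a x ≤ k) → ∀ T, v ∣ T →
      T + (v-1)*k ≤ (∑ x ∈ O, a x) + m * v →
      ∃ B ⊆ O, v ∣ (∑ x ∈ B, a x) ∧ (∑ x ∈ B, a x) ≤ T ∧ T ≤ (∑ x ∈ B, a x) + m * v := by
  have hk1 : 1 ≤ k := le_trans hv1 hvk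
  intro n
  induction n with
  | zero =>
    intro O hcard ha T hdvd hbig
    refine ⟨∅, Finset.empty_subset _, by simp, by simp, ?_⟩
    simp only [Finset.sum_empty, zero_add]
    have hO : O = ∅ := Finset.card_eq_zero.mp (Nat.le_zero.mp hcard)
    rw [hO] at hbig
    simp at hbig
    omega
  | succ n ih =>
    intro O hcard ha T hdvd hbig
    by_cases hT : T ≤ m * v
    · exact ⟨∅, Finset.empty_subset _, by simp, by simp, by simpa using hT⟩
    push_neg at hT
    -- O is big
    have hOsum : (v-1)*k + 1 ≤ ∑ x ∈ O, a x := by omega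
    have hOcard : v ≤ O.card := by
      by_contra hc
      push_neg at hc
      have : ∑ x ∈ O, a x ≤ O.card * k := by
        have := Finset.sum_le_card_nsmul O a k ha
        simpa using this
      have : O.card * k ≤ (v-1) * k := Nat.mul_le_mul_right k (by omega)
      omega
    obtain ⟨Tb, hTbO, hTbne, hTbcard, hTbdvd⟩ := exists_block a v hv1 O hOcard
    have hTbsum_le : ∑ x ∈ Tb, a x ≤ v * k := by
      have h1 := Finset.sum_le_card_nsmul Tb a k (fun x hx => ha x (hTbO hx))
      simp only [smul_eq_mul] at h1
      exact h1.trans (Nat.mul_le_mul_right k hTbcard)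
    have hvk2 : v * k ≤ k^3 := by
      have h1 : v * k ≤ k * k := Nat.mul_le_mul_right k hvk
      have h2 : k * k * 1 ≤ k * k * k := Nat.mul_le_mul_left (k*k) hk1
      have h3 : k^3 = k * k * k := by ring
      omega
    have hTbsum_le_T : ∑ x ∈ Tb, a x ≤ T := by omega
    have hsplit : ∑ x ∈ O \ Tb, a x + ∑ x ∈ Tb, a x = ∑ x ∈ O, a x :=
      Finset.sum_sdiff hTbO
    have hcard' : (O \ Tb).card ≤ n := by
      have h1 : (O \ Tb).card = O.card - Tb.card := Finset.card_sdiff_of_subset hTbO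
      have h2 : 1 ≤ Tb.card := Finset.card_pos.mpr hTbne
      omega
    obtain ⟨B, hBO, hBdvd, hBle, hBge⟩ := ih (O \ Tb) hcard'
      (fun x hx => ha x (Finset.mem_sdiff.mp hx).1) (T - ∑ x ∈ Tb, a x)
      (Nat.dvd_sub hdvd hTbdvd) (by omega)
    refine ⟨B ∪ Tb, ?_, ?_, ?_, ?_⟩
    · exact Finset.union_subset (hBO.trans (Finset.sdiff_subset)) hTbO
    · rw [Finset.sum_union (Finset.disjoint_left.mpr (fun x hx => (Finset.mem_sdiff.mp (hBO hx)).2))]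
      exact Nat.dvd_add hBdvd hTbdvd
    · rw [Finset.sum_union (Finset.disjoint_left.mpr (fun x hx => (Finset.mem_sdiff.mp (hBO hx)).2))]
      omega
    · rw [Finset.sum_union (Finset.disjoint_left.mpr (fun x hx => (Finset.mem_sdiff.mp (hBO hx)).2))]
      omega

lemma exists_u {α : Type*} [DecidableEq α] (k : ℕ) (hk : 1 ≤ k) (D : Finset α)
    (hcard : D.card = k^4) (a : α → ℕ) (ha : ∀ x ∈ D, 1 ≤ a x ∧ a x ≤ k) :
    ∃ u, 1 ≤ u ∧ u ≤ k ∧ ∀ j, 1 ≤ j → j * u ≤ k^4 → ∃ B ⊆ D, ∑ x ∈ B, a x = j * u := by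
  classical
  have hsumD : k^4 ≤ ∑ x ∈ D, a x := by
    have := Finset.card_nsmul_le_sum D a 1 (fun x hx => (ha x hx).1)
    simp only [smul_eq_mul, mul_one, hcard] at this
    exact this
  have hfib : ∑ v ∈ Finset.Icc 1 k, ∑ x ∈ D.filter (fun x => a x = v), a x = ∑ x ∈ D, a x :=
    Finset.sum_fiberwise_of_maps_to (fun x hx => Finset.mem_Icc.mpr ⟨(ha x hx).1, (ha x hx).2⟩) a
  have hinner : ∀ v, ∑ x ∈ D.filter (fun x => a x = v), a x
      = (D.filter (fun x => a x = v)).card * v := by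
    intro v
    rw [Finset.sum_congr rfl (fun x hx => (Finset.mem_filter.mp hx).2)]
    simp [mul_comm]
  obtain ⟨v, hvmem, hmv⟩ : ∃ v ∈ Finset.Icc 1 k, k^3 ≤ (D.filter (fun x => a x = v)).card * v := by
    by_contra hcon
    push_neg at hcon
    have hle : ∑ v ∈ Finset.Icc 1 k, ∑ x ∈ D.filter (fun x => a x = v), a x
        ≤ (Finset.Icc 1 k).card * (k^3 - 1) := by
      have := Finset.sum_le_card_nsmul (Finset.Icc 1 k)
        (fun v => ∑ x ∈ D.filter (fun x => a x = v), a x) (k^3 - 1)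
        (fun v hv => by rw [hinner]; have := hcon v hv; omega)
      simpa using this
    rw [hfib] at hle
    have hccc : (Finset.Icc 1 k).card = k := by simp
    rw [hccc] at hle
    have h4 : k^4 = k * k^3 := by ring
    have h5 : k * (k^3 - 1) < k * k^3 :=
      (Nat.mul_lt_mul_left hk).mpr (by have : 1 ≤ k^3 := Nat.one_le_pow _ _ hk; omega)
    omega
  obtain ⟨hv1, hvk⟩ := Finset.mem_Icc.mp hvmem
  set pile := D.filter (fun x => a x = v) with hpile
  set O := D.filter (fun x => ¬ a x = v) with hO
  set m := pile.card with hm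
  have hdisj : Disjoint O pile := by
    rw [Finset.disjoint_left]
    intro x hx1 hx2
    rw [hO, Finset.mem_filter] at hx1
    rw [hpile, Finset.mem_filter] at hx2
    exact hx1.2 hx2.2
  have hpilesum : ∑ x ∈ pile, a x = m * v := by
    rw [hpile, Finset.sum_congr rfl (fun x hx => (Finset.mem_filter.mp hx).2)]
    simp [hm, mul_comm, hpile]
  have hcard_split : m + O.card = k^4 := by
    have hcs := Finset.card_filter_add_card_filter_not (s := D) (p := fun x => a x = v)
    beta_reduce at hcs
    rw [hcard] at hcs
    exact hcs
  have hkm : k ≤ m := by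
    have h1 : m * v ≤ m * k := Nat.mul_le_mul_left m hvk
    have h2 : k^3 = k^2 * k := by ring
    have h3 : k^2 * k ≤ m * k := by omega
    have h4 : k^2 ≤ m := Nat.le_of_mul_le_mul_right h3 hk
    have h5 : k * 1 ≤ k * k := Nat.mul_le_mul_left k hk
    have h6 : k^2 = k * k := by ring
    omega
  refine ⟨v, hv1, hvk, ?_⟩
  intro j hj hjk
  have hOsum : k^4 - m ≤ ∑ x ∈ O, a x := by
    have h0 := Finset.card_nsmul_le_sum O a 1 (fun x hx => (ha x (Finset.filter_subset _ _ hx)).1)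
    simp only [smul_eq_mul, mul_one] at h0
    have h1 : O.card ≤ ∑ x ∈ O, a x := h0
    omega
  have hbig : j * v + (v-1)*k ≤ (∑ x ∈ O, a x) + m * v := by
    have h1 : (v-1)*k ≤ (v-1)*m := Nat.mul_le_mul_left _ hkm
    have h2 : (v-1)*m = v*m - m := by rw [Nat.sub_one_mul]
    have h3 : m ≤ v * m := Nat.le_mul_of_pos_left m hv1
    have h4 : v * m = m * v := mul_comm _ _
    omega
  obtain ⟨B, hBO, hBdvd, hBle, hBge⟩ := claimC a k v m hv1 hvk hmv O.card O le_rfl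
    (fun x hx => (ha x (Finset.filter_subset _ _ hx)).2) (j*v) (dvd_mul_left v j) hbig
  set c := (j * v - ∑ x ∈ B, a x) / v with hc
  have hcdvd : v ∣ j * v - ∑ x ∈ B, a x := Nat.dvd_sub (dvd_mul_left v j) hBdvd
  have hcv : c * v = j * v - ∑ x ∈ B, a x := Nat.div_mul_cancel hcdvd
  have hcm : c ≤ m := by
    have h1 : c * v ≤ m * v := by omega
    exact Nat.le_of_mul_le_mul_right h1 hv1
  obtain ⟨C, hCpile, hCcard⟩ := Finset.exists_subset_card_eq (s := pile) (n := c) (hm ▸ hcm)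
  have hCsum : ∑ x ∈ C, a x = c * v := by
    rw [Finset.sum_congr rfl (fun x hx => (Finset.mem_filter.mp (hCpile hx)).2)]
    simp [hCcard, mul_comm]
  refine ⟨B ∪ C, ?_, ?_⟩
  · exact Finset.union_subset (hBO.trans (Finset.filter_subset _ _)) (hCpile.trans (Finset.filter_subset _ _))
  · rw [Finset.sum_union (Finset.disjoint_of_subset_left hBO (Finset.disjoint_of_subset_right hCpile hdisj))]
    omega

lemma isMaxStable_iff [Fintype V] [DecidableEq V] (G : SimpleGraph V) (S : Finset V) :
    IsMaxStable G S ↔ IsStable G ↑S ∧ ∀ y, y ∉ S → ∃ x ∈ S, G.Adj x y := by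
  constructor
  · rintro ⟨hst, hmax⟩
    refine ⟨hst, fun y hy => ?_⟩
    by_contra hno
    push_neg at hno
    have hins : IsStable G ↑(insert y S) := by
      intro u hu w hw
      simp only [Finset.coe_insert, Set.mem_insert_iff, Finset.mem_coe] at hu hw
      rcases hu with rfl | hu <;> rcases hw with rfl | hw
      · exact G.loopless.irrefl _
      · intro h; exact hno w hw (h.symm)
      · exact hno u hu
      · exact hst hu hw
    have := hmax _ hins (Finset.subset_insert y S)
    rw [this] at hy
    exact hy (Finset.mem_insert_self y S)
  · rintro ⟨hst, hdom⟩
    refine ⟨hst, fun T hT hST => ?_⟩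
    refine Finset.Subset.antisymm hST fun y hyT => ?_
    by_contra hyS
    obtain ⟨x, hxS, hadj⟩ := hdom y hyS
    exact hT (Finset.mem_coe.mpr (hST hxS)) (Finset.mem_coe.mpr hyT) hadj

lemma exists_isMaxStable [Fintype V] [DecidableEq V] (G : SimpleGraph V) :
    ∃ S : Finset V, IsMaxStable G S := by
  classical
  have hne : (Finset.univ.powerset.filter (fun S : Finset V => IsStable G ↑S)).Nonempty := by
    refine ⟨∅, ?_⟩
    simp only [Finset.mem_filter, Finset.mem_powerset, Finset.empty_subset, true_and]
    intro x hx
    simp at hx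
  obtain ⟨S, hS, hmax⟩ := Finset.exists_max_image _ Finset.card hne
  rw [Finset.mem_filter] at hS
  refine ⟨S, hS.2, fun T hT hST => ?_⟩
  refine Finset.eq_of_subset_of_card_le hST (hmax T ?_)
  rw [Finset.mem_filter]
  exact ⟨Finset.mem_powerset.mpr (Finset.subset_univ T), hT⟩

lemma not_kequistable_zero [Fintype V] [DecidableEq V] (G : SimpleGraph V) :
    ¬ KEquistable G 0 := by
  rintro ⟨t, ht, w, hw, hstruct⟩
  obtain ⟨S, hS⟩ := exists_isMaxStable G
  have hsum := (hstruct S).mp hS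
  have hzero : ∑ x ∈ S, w x = 0 :=
    Finset.sum_eq_zero (fun x _ => Nat.le_zero.mp (hw x).2)
  omega

theorem stmt13 [Fintype V] [DecidableEq V] (G : SimpleGraph V) (k : ℕ)
    (X : Finset V) (hX : TwinClass G ↑X) (hXs : IsStable G ↑X)
    (hiso : ∀ x ∈ X, ∀ y, y ∉ X → ¬ G.Adj x y)
    (hXbig : k ^ 5 ≤ X.card) (hsmall : Xᶜ.card ≤ k ^ 3)
    (D : Finset V) (hD : D ⊆ X) (hDcard : D.card = k ^ 4) :
    KEquistable G k ↔ KEquistable (G.induce ↑(Xᶜ ∪ D)) k := by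
  classical
  rcases Nat.eq_zero_or_pos k with hk0 | hk
  · subst hk0
    exact iff_of_false (not_kequistable_zero G) (not_kequistable_zero _)
  -- main case : 1 ≤ k
  set U : Finset V := Xᶜ ∪ D with hU
  set σ : Set V := ↑U with hσ
  set ι : Finset ↥σ → Finset V := fun S' => S'.map (Function.Embedding.subtype _) with hι
  have hisoX : ∀ x ∈ X, ∀ y, ¬ G.Adj x y := by
    intro x hx y
    by_cases hy : y ∈ X
    · exact hXs (Finset.mem_coe.mpr hx) (Finset.mem_coe.mpr hy)
    · exact hiso x hx y hy
  have hDU : D ⊆ U := Finset.subset_union_right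
  have hXcU : Xᶜ ⊆ U := Finset.subset_union_left
  have hmemσ : ∀ {x : V}, x ∈ U → x ∈ σ := fun {x} hx => by
    rw [hσ]; exact Finset.mem_coe.mpr hx
  have hmemU : ∀ (x : ↥σ), (↑x : V) ∈ U := fun x => Finset.mem_coe.mp x.2
  have hmemι : ∀ (S' : Finset ↥σ) (x : ↥σ), (↑x : V) ∈ ι S' ↔ x ∈ S' := by
    intro S' x
    rw [hι]
    simp only [Finset.mem_map, Function.Embedding.coe_subtype]
    constructor
    · rintro ⟨y, hy, hyx⟩
      rwa [Subtype.ext hyx] at hy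
    · intro h; exact ⟨x, h, rfl⟩
  have hmemι' : ∀ (S' : Finset ↥σ) (x : V), x ∈ ι S' → x ∈ U := by
    intro S' x hx
    rw [hι] at hx
    simp only [Finset.mem_map, Function.Embedding.coe_subtype] at hx
    obtain ⟨y, _, rfl⟩ := hx
    exact hmemU y
  have hmemι'' : ∀ (S' : Finset ↥σ) (x : V), x ∈ ι S' → ∃ y ∈ S', (↑y : V) = x := by
    intro S' x hx
    rw [hι] at hx
    simp only [Finset.mem_map, Function.Embedding.coe_subtype] at hx
    exact hx
  -- sum transfer
  have hsumι : ∀ (S' : Finset ↥σ) (f : V → ℕ), ∑ x ∈ S', f ↑x = ∑ x ∈ ι S', f x := by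
    intro S' f
    rw [hι, Finset.sum_map]
    rfl
  -- the middle predicate
  set Pm : Finset V → Prop :=
    fun M => IsStable G ↑M ∧ ∀ y, y ∉ X → y ∉ M → ∃ x ∈ M, G.Adj x y with hPm
  -- characterization for G
  have hmaxG : ∀ S : Finset V, IsMaxStable G S ↔ (X ⊆ S ∧ Pm (S ∩ Xᶜ)) := by
    intro S
    rw [isMaxStable_iff, hPm]
    constructor
    · rintro ⟨hst, hdom⟩
      have hXS : X ⊆ S := by
        intro x hx
        by_contra hxS
        obtain ⟨z, _, hadj⟩ := hdom x hxS
        exact hisoX x hx z hadj.symm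
      refine ⟨hXS, fun u hu w hw => hst (Finset.mem_coe.mpr
        (Finset.mem_of_mem_inter_left (Finset.mem_coe.mp hu)))
        (Finset.mem_coe.mpr (Finset.mem_of_mem_inter_left (Finset.mem_coe.mp hw))), ?_⟩
      intro y hyX hyM
      have hyS : y ∉ S := fun hyS => hyM (Finset.mem_inter.mpr ⟨hyS, Finset.mem_compl.mpr hyX⟩)
      obtain ⟨x, hxS, hadj⟩ := hdom y hyS
      have hxX : x ∉ X := fun hxX => hisoX x hxX y hadj
      exact ⟨x, Finset.mem_inter.mpr ⟨hxS, Finset.mem_compl.mpr hxX⟩, hadj⟩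
    · rintro ⟨hXS, hstM, hdomM⟩
      constructor
      · intro u hu w hw hadj
        by_cases huX : u ∈ X
        · exact hisoX u huX w hadj
        by_cases hwX : w ∈ X
        · exact hisoX w hwX u hadj.symm
        · exact hstM (Finset.mem_coe.mpr (Finset.mem_inter.mpr
            ⟨Finset.mem_coe.mp hu, Finset.mem_compl.mpr huX⟩))
            (Finset.mem_coe.mpr (Finset.mem_inter.mpr
            ⟨Finset.mem_coe.mp hw, Finset.mem_compl.mpr hwX⟩)) hadj
      · intro y hyS
        have hyX : y ∉ X := fun h => hyS (hXS h)
        have hyM : y ∉ S ∩ Xᶜ := fun h => hyS (Finset.mem_inter.mp h).1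
        obtain ⟨x, hxM, hadj⟩ := hdomM y hyX hyM
        exact ⟨x, (Finset.mem_inter.mp hxM).1, hadj⟩
  -- characterization for G'
  have hadjind : ∀ (u w : ↥σ), (G.induce σ).Adj u w ↔ G.Adj ↑u ↑w := by
    intro u w
    simp [SimpleGraph.induce]
  have hmaxG' : ∀ S' : Finset ↥σ, IsMaxStable (G.induce σ) S' ↔
      (D ⊆ ι S' ∧ Pm (ι S' ∩ Xᶜ)) := by
    intro S'
    rw [isMaxStable_iff, hPm]
    constructor
    · rintro ⟨hst', hdom'⟩
      have hDsub : D ⊆ ι S' := by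
        intro d hd
        have hdσ : d ∈ σ := hmemσ (hDU hd)
        by_cases h : (⟨d, hdσ⟩ : ↥σ) ∈ S'
        · exact (hmemι S' ⟨d, hdσ⟩).mpr h
        · obtain ⟨x, _, hadj⟩ := hdom' _ h
          exact absurd (((hadjind x ⟨d, hdσ⟩).mp hadj).symm) (hisoX d (hD hd) ↑x)
      refine ⟨hDsub, ?_, ?_⟩
      · intro p hp q hq hadj
        obtain ⟨p', hp'S, hp'⟩ := hmemι'' S' p
          (Finset.mem_of_mem_inter_left (Finset.mem_coe.mp hp))
        obtain ⟨q', hq'S, hq'⟩ := hmemι'' S' q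
          (Finset.mem_of_mem_inter_left (Finset.mem_coe.mp hq))
        refine hst' (Finset.mem_coe.mpr hp'S) (Finset.mem_coe.mpr hq'S) ?_
        rw [hadjind, hp', hq']
        exact hadj
      · intro y hyX hyM
        have hyσ : y ∈ σ := hmemσ (hXcU (Finset.mem_compl.mpr hyX))
        have hy'S : (⟨y, hyσ⟩ : ↥σ) ∉ S' := fun h => hyM (Finset.mem_inter.mpr
          ⟨(hmemι S' ⟨y, hyσ⟩).mpr h, Finset.mem_compl.mpr hyX⟩)
        obtain ⟨x, hxS', hadj⟩ := hdom' _ hy'S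
        have hadjV : G.Adj ↑x y := (hadjind x ⟨y, hyσ⟩).mp hadj
        have hxX : (↑x : V) ∉ X := fun hxX => hisoX _ hxX y hadjV
        exact ⟨↑x, Finset.mem_inter.mpr ⟨(hmemι S' x).mpr hxS', Finset.mem_compl.mpr hxX⟩, hadjV⟩
    · rintro ⟨hDS, hstM, hdomM⟩
      constructor
      · intro p hp q hq hadj
        have hadjV : G.Adj ↑p ↑q := (hadjind p q).mp hadj
        by_cases hpX : (↑p : V) ∈ X
        · exact hisoX _ hpX _ hadjV
        by_cases hqX : (↑q : V) ∈ X
        · exact hisoX _ hqX _ hadjV.symm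
        · exact hstM (Finset.mem_coe.mpr (Finset.mem_inter.mpr
            ⟨(hmemι S' p).mpr (Finset.mem_coe.mp hp), Finset.mem_compl.mpr hpX⟩))
            (Finset.mem_coe.mpr (Finset.mem_inter.mpr
            ⟨(hmemι S' q).mpr (Finset.mem_coe.mp hq), Finset.mem_compl.mpr hqX⟩)) hadjV
      · intro y hy
        by_cases hyX : (↑y : V) ∈ X
        · exfalso
          have hyU : (↑y : V) ∈ U := hmemU y
          have hyD : (↑y : V) ∈ D := by
            rcases Finset.mem_union.mp hyU with h | h
            · exact absurd hyX (Finset.mem_compl.mp h)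
            · exact h
          exact hy ((hmemι S' y).mp (hDS hyD))
        · have hyM : (↑y : V) ∉ ι S' ∩ Xᶜ := fun h =>
            hy ((hmemι S' y).mp (Finset.mem_of_mem_inter_left h))
          obtain ⟨x, hxM, hadj⟩ := hdomM ↑y hyX hyM
          obtain ⟨x', hx'S, hx'⟩ := hmemι'' S' x (Finset.mem_of_mem_inter_left hxM)
          refine ⟨x', Finset.mem_coe.mpr hx'S, ?_⟩
          rw [hadjind, hx']
          exact hadj
  -- generic disjointness
  have hdisjXXc : ∀ {A B : Finset V}, A ⊆ X → B ⊆ Xᶜ → Disjoint A B := by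
    intro A B hA hB
    rw [Finset.disjoint_left]
    intro x hxA hxB
    exact (Finset.mem_compl.mp (hB hxB)) (hA hxA)
  -- decomposition of ι S' when D ⊆ ι S'
  have hsplitι : ∀ S' : Finset ↥σ, D ⊆ ι S' → ι S' = D ∪ (ι S' ∩ Xᶜ) := by
    intro S' hDS
    ext x
    constructor
    · intro hx
      rcases Finset.mem_union.mp (hmemι' S' x hx) with h | h
      · exact Finset.mem_union.mpr (Or.inr (Finset.mem_inter.mpr ⟨hx, h⟩))
      · exact Finset.mem_union.mpr (Or.inl h)
    · intro hx
      rcases Finset.mem_union.mp hx with h | h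
      · exact hDS h
      · exact Finset.mem_of_mem_inter_left h
  -- π and its section property
  set π : Finset V → Finset ↥σ := fun T => Finset.subtype (fun x => x ∈ σ) T with hπdef
  have hπ : ∀ T : Finset V, T ⊆ U → ι (π T) = T := by
    intro T hT
    rw [hπdef, hι]
    show (Finset.subtype (fun x => x ∈ σ) T).map (Function.Embedding.subtype _) = T
    rw [Finset.subtype_map]
    exact Finset.filter_true_of_mem (fun x hx => hmemσ (hT hx))
  -- one-element sufficiency for k^4 etc
  have hk4 : 1 ≤ k^4 := Nat.one_le_pow _ _ hk
  have hk5 : 1 ≤ k^5 := Nat.one_le_pow _ _ hk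
  constructor
  · -- forward direction
    rintro ⟨t, ht, w, hw, hstruct⟩
    obtain ⟨S₀, hS₀⟩ := exists_isMaxStable G
    obtain ⟨hXS₀, hPm₀⟩ := (hmaxG S₀).mp hS₀
    set μ : ℕ := ∑ x ∈ S₀ ∩ Xᶜ, w x with hμ
    have hS₀dec : ∑ x ∈ S₀, w x = ∑ x ∈ X, w x + μ := by
      have h1 : ∑ x ∈ S₀ \ X, w x + ∑ x ∈ X, w x = ∑ x ∈ S₀, w x := Finset.sum_sdiff hXS₀
      have h2 : S₀ \ X = S₀ ∩ Xᶜ := sdiff_eq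
      rw [h2] at h1
      omega
    have htX : t = ∑ x ∈ X, w x + μ := by
      have := (hstruct S₀).mp hS₀
      omega
    -- every Pm set has weight μ
    have hPmμ : ∀ M : Finset V, M ⊆ Xᶜ → Pm M → ∑ x ∈ M, w x = μ := by
      intro M hM hPmM
      have hMmax : IsMaxStable G (X ∪ M) := by
        refine (hmaxG _).mpr ⟨Finset.subset_union_left, ?_⟩
        have : (X ∪ M) ∩ Xᶜ = M := by
          ext x
          simp only [Finset.mem_inter, Finset.mem_union, Finset.mem_compl]
          constructor
          · rintro ⟨h1 | h1, h2⟩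
            · exact absurd h1 h2
            · exact h1
          · intro h
            exact ⟨Or.inr h, Finset.mem_compl.mp (hM h)⟩
        rw [this]
        exact hPmM
      have hsum := (hstruct _).mp hMmax
      have hdec : ∑ x ∈ X ∪ M, w x = ∑ x ∈ X, w x + ∑ x ∈ M, w x :=
        Finset.sum_union (hdisjXXc (le_refl X) hM)
      omega
    refine ⟨∑ x ∈ D, w x + μ, ?_, fun x => w ↑x, fun x => hw ↑x, ?_⟩
    · have : D.card • 1 ≤ ∑ x ∈ D, w x :=
        Finset.card_nsmul_le_sum D w 1 (fun x _ => (hw x).1)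
      simp only [smul_eq_mul, mul_one, hDcard] at this
      omega
    intro S'
    rw [hmaxG' S']
    constructor
    · rintro ⟨hDS, hPmS⟩
      have hsum : ∑ x ∈ S', w ↑x = ∑ x ∈ ι S', w x := hsumι S' w
      have hdec : ∑ x ∈ ι S', w x = ∑ x ∈ D, w x + ∑ x ∈ ι S' ∩ Xᶜ, w x := by
        rw [hsplitι S' hDS]
        rw [Finset.sum_union (hdisjXXc hD Finset.inter_subset_right)]
        rw [← hsplitι S' hDS]
      rw [hsum, hdec, hPmμ _ Finset.inter_subset_right hPmS]
    · intro hsum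
      set S : Finset V := (X \ D) ∪ ι S' with hS
      have hdisj2 : Disjoint (X \ D) (ι S') := by
        rw [Finset.disjoint_left]
        intro x hx1 hx2
        have hxU : x ∈ U := hmemι' S' x hx2
        obtain ⟨hxX, hxD⟩ := Finset.mem_sdiff.mp hx1
        rcases Finset.mem_union.mp hxU with h | h
        · exact (Finset.mem_compl.mp h) hxX
        · exact hxD h
      have hSsum : ∑ x ∈ S, w x = t := by
        rw [hS, Finset.sum_union hdisj2]
        have h1 : ∑ x ∈ ι S', w x = ∑ x ∈ D, w x + μ := by
          rw [← hsumι S' w]; exact hsum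
        have h2 : ∑ x ∈ X \ D, w x + ∑ x ∈ D, w x = ∑ x ∈ X, w x := Finset.sum_sdiff hD
        omega
      obtain ⟨hXS, hPmS⟩ := (hmaxG S).mp ((hstruct S).mpr hSsum)
      have hDι : D ⊆ ι S' := by
        intro d hd
        have : d ∈ S := hXS (hD hd)
        rcases Finset.mem_union.mp this with h | h
        · exact absurd hd (Finset.mem_sdiff.mp h).2
        · exact h
      have hMeq : S ∩ Xᶜ = ι S' ∩ Xᶜ := by
        rw [hS, Finset.union_inter_distrib_right]
        have : (X \ D) ∩ Xᶜ = ∅ := by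
          rw [← Finset.disjoint_iff_inter_eq_empty]
          exact hdisjXXc (Finset.sdiff_subset) (le_refl Xᶜ)
        rw [this, Finset.empty_union]
      exact ⟨hDι, hMeq ▸ hPmS⟩
  · -- backward direction
    rintro ⟨t', ht', w', hw', hstruct'⟩
    set a : V → ℕ := fun x => if h : x ∈ σ then w' ⟨x, h⟩ else 1 with hadef
    have haw : ∀ (x : ↥σ), a ↑x = w' x := by
      intro x
      rw [hadef]
      dsimp only
      rw [dif_pos x.2]
    have hsumw' : ∀ S' : Finset ↥σ, ∑ x ∈ S', w' x = ∑ x ∈ ι S', a x := by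
      intro S'
      rw [← hsumι S' a]
      exact Finset.sum_congr rfl (fun x _ => (haw x).symm)
    have haU : ∀ x ∈ U, 1 ≤ a x ∧ a x ≤ k := by
      intro x hx
      rw [hadef]
      dsimp only
      rw [dif_pos (hmemσ hx)]
      exact hw' _
    -- sum over D∪M for M ⊆ Xᶜ
    have hDM : ∀ M : Finset V, M ⊆ Xᶜ → ∑ x ∈ D ∪ M, a x = ∑ x ∈ D, a x + ∑ x ∈ M, a x :=
      fun M hM => Finset.sum_union (hdisjXXc hD hM)
    have hDMU : ∀ M : Finset V, M ⊆ Xᶜ → D ∪ M ⊆ U :=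
      fun M hM => Finset.union_subset hDU (hM.trans hXcU)
    have hDMXc : ∀ M : Finset V, M ⊆ Xᶜ → (D ∪ M) ∩ Xᶜ = M := by
      intro M hM
      rw [Finset.union_inter_distrib_right]
      have h1 : D ∩ Xᶜ = ∅ := by
        rw [← Finset.disjoint_iff_inter_eq_empty]
        exact hdisjXXc hD (le_refl Xᶜ)
      have h2 : M ∩ Xᶜ = M := Finset.inter_eq_left.mpr hM
      rw [h1, h2, Finset.empty_union]
    obtain ⟨S₀', hS₀'⟩ := exists_isMaxStable (G.induce σ)
    obtain ⟨hDS₀, hPm₀⟩ := (hmaxG' S₀').mp hS₀'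
    set μ : ℕ := ∑ x ∈ ι S₀' ∩ Xᶜ, a x with hμ
    have ht'eq : t' = ∑ x ∈ D, a x + μ := by
      have h1 := (hstruct' S₀').mp hS₀'
      rw [hsumw'] at h1
      have h2 : ∑ x ∈ ι S₀', a x = ∑ x ∈ D, a x + μ := by
        conv_lhs => rw [hsplitι S₀' hDS₀]
        rw [hDM _ Finset.inter_subset_right]
      omega
    -- key : Pm M ↔ weight μ
    have hkey : ∀ M : Finset V, M ⊆ Xᶜ → (Pm M ↔ ∑ x ∈ M, a x = μ) := by
      intro M hM
      constructor
      · intro hPmM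
        have hmax : IsMaxStable (G.induce σ) (π (D ∪ M)) := by
          refine (hmaxG' _).mpr ?_
          rw [hπ _ (hDMU M hM), hDMXc M hM]
          exact ⟨Finset.subset_union_left, hPmM⟩
        have := (hstruct' _).mp hmax
        rw [hsumw', hπ _ (hDMU M hM), hDM M hM] at this
        omega
      · intro hMμ
        have hsum : ∑ x ∈ π (D ∪ M), w' x = t' := by
          rw [hsumw', hπ _ (hDMU M hM), hDM M hM]
          omega
        have := (hmaxG' _).mp ((hstruct' _).mpr hsum)
        rw [hπ _ (hDMU M hM), hDMXc M hM] at this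
        exact this.2
    -- weights on Xᶜ subsets are small
    have hXcsum : ∀ M : Finset V, M ⊆ Xᶜ → ∑ x ∈ M, a x ≤ k^4 := by
      intro M hM
      have h1 : ∑ x ∈ M, a x ≤ M.card • k :=
        Finset.sum_le_card_nsmul M a k (fun x hx => (haU x (hXcU (hM hx))).2)
      have h2 : M.card ≤ k^3 := le_trans (Finset.card_le_card hM) hsmall
      have h3 : M.card * k ≤ k^3 * k := Nat.mul_le_mul_right k h2
      have h4 : k^3 * k = k^4 := by ring
      simp only [smul_eq_mul] at h1
      omega
    -- the combinatorial choice of u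
    obtain ⟨u, hu1, huk, hufree⟩ := exists_u k hk D hDcard a
      (fun x hx => haU x (hDU hx))
    -- no bad sums
    have hnobad : ∀ j, 1 ≤ j → ∀ M : Finset V, M ⊆ Xᶜ → ∑ x ∈ M, a x ≠ μ + j * u := by
      intro j hj M hM heq
      have hjk4 : j * u ≤ k^4 := by
        have := hXcsum M hM
        omega
      obtain ⟨B, hBD, hBsum⟩ := hufree j hj hjk4
      have hsubU : (D \ B) ∪ M ⊆ U :=
        Finset.union_subset ((Finset.sdiff_subset).trans hDU) (hM.trans hXcU)
      have hdisj3 : Disjoint (D \ B) M := hdisjXXc ((Finset.sdiff_subset).trans hD) hM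
      have hsum3 : ∑ x ∈ π ((D \ B) ∪ M), w' x = t' := by
        rw [hsumw', hπ _ hsubU, Finset.sum_union hdisj3]
        have h1 : ∑ x ∈ D \ B, a x + ∑ x ∈ B, a x = ∑ x ∈ D, a x := Finset.sum_sdiff hBD
        omega
      have hmax3 := (hmaxG' _).mp ((hstruct' _).mpr hsum3)
      rw [hπ _ hsubU] at hmax3
      have hBne : B.Nonempty := by
        have hju : 1 * 1 ≤ j * u := Nat.mul_le_mul hj hu1
        by_contra hB
        rw [Finset.not_nonempty_iff_eq_empty] at hB
        rw [hB, Finset.sum_empty] at hBsum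
        omega
      obtain ⟨b, hb⟩ := hBne
      have hbin : b ∈ (D \ B) ∪ M := hmax3.1 (hBD hb)
      rcases Finset.mem_union.mp hbin with h | h
      · exact (Finset.mem_sdiff.mp h).2 hb
      · exact (Finset.mem_compl.mp (hM h)) (hD (hBD hb))
    -- construct the structure for G
    refine ⟨u * X.card + μ, ?_, fun x => if x ∈ X then u else a x, ?_, ?_⟩
    · have h1 : 1 ≤ X.card := le_trans hk5 hXbig
      have h2 : 1 * 1 ≤ u * X.card := Nat.mul_le_mul hu1 h1
      omega
    · intro x
      dsimp only
      by_cases hx : x ∈ X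
      · rw [if_pos hx]; exact ⟨hu1, huk⟩
      · rw [if_neg hx]; exact haU x (hXcU (Finset.mem_compl.mpr hx))
    intro S
    rw [hmaxG S]
    set w : V → ℕ := fun x => if x ∈ X then u else a x with hwdef
    have hdec : ∑ x ∈ S, w x = (S ∩ X).card * u + ∑ x ∈ S ∩ Xᶜ, a x := by
      have h1 : ∑ x ∈ S \ X, w x + ∑ x ∈ S ∩ X, w x = ∑ x ∈ S, w x := by
        have := Finset.sum_sdiff (f := w) (Finset.inter_subset_left (s₁ := S) (s₂ := X))
        have he : S \ (S ∩ X) = S \ X := by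
          rw [Finset.sdiff_inter_self_left]
        rw [he] at this
        exact this
      have h2 : ∑ x ∈ S ∩ X, w x = (S ∩ X).card * u := by
        calc ∑ x ∈ S ∩ X, w x = ∑ _x ∈ S ∩ X, u :=
              Finset.sum_congr rfl (fun x hx => by
                simp only [hwdef]
                rw [if_pos (Finset.mem_of_mem_inter_right hx)])
          _ = (S ∩ X).card * u := by rw [Finset.sum_const, smul_eq_mul]
      have h3 : ∑ x ∈ S \ X, w x = ∑ x ∈ S ∩ Xᶜ, a x := by
        rw [sdiff_eq]
        exact Finset.sum_congr rfl (fun x hx => by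
          simp only [hwdef]
          rw [if_neg (Finset.mem_compl.mp (Finset.mem_of_mem_inter_right hx))])
      omega
    constructor
    · rintro ⟨hXS, hPmS⟩
      rw [hdec]
      have h1 : S ∩ X = X := Finset.inter_eq_right.mpr hXS
      have h2 : ∑ x ∈ S ∩ Xᶜ, a x = μ := (hkey _ Finset.inter_subset_right).mp hPmS
      rw [h1, h2, mul_comm]
    · intro hsum
      rw [hdec] at hsum
      set i := (S ∩ X).card with hidef
      have hile : i ≤ X.card := Finset.card_le_card Finset.inter_subset_right
      set j := X.card - i with hjdef
      have hXcu : X.card * u = i * u + j * u := by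
        have : X.card = i + j := by omega
        rw [this, add_mul]
      have hMsum : ∑ x ∈ S ∩ Xᶜ, a x = μ + j * u := by
        have : u * X.card = X.card * u := mul_comm _ _
        omega
      rcases Nat.eq_zero_or_pos j with hj0 | hjpos
      · have hiX : i = X.card := by omega
        have hSX : S ∩ X = X :=
          Finset.eq_of_subset_of_card_le Finset.inter_subset_right (by omega)
        have hXS : X ⊆ S := by
          intro x hx
          exact Finset.mem_of_mem_inter_left (hSX ▸ hx)
        refine ⟨hXS, (hkey _ Finset.inter_subset_right).mpr ?_⟩
        rw [hMsum, hj0]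
        simp
      · exact absurd hMsum (hnobad j hjpos _ Finset.inter_subset_right)
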